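/- arXiv:2109.04671 — 5 statements merged into one kernel-verified Lean document; each statement's English description precedes it below -/
import Mathlib

section
/- Let K ∈ ℝ^{m×m} be symmetric with K 1_m = 0_m, and suppose the submatrix K_{−k,−k} is positive definite for some k ∈ {1,…,m}. Then: (i) K_{−j,−j} is positive definite for every j ∈ {1,…,m}; (ii) K is positive semi-definite; and (iii) for a ∈ ℝ^m, a^⊤ K a = 0 if and only if all coordinates of a are equal, i.e., a is a scalar multiple of 1_m. -/
open Matrix Finset

/-- For symmetric `K` with `K 1 = 0` such that some principal submatrix `K_{-k,-k}` is
positive definite: every `K_{-j,-j}` is positive definite, `K` is positive semi-definite,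
and the quadratic form vanishes exactly on constant vectors. -/
theorem submatrix_posDef_consequences (n : ℕ)
    (K : Matrix (Fin (n + 1)) (Fin (n + 1)) ℝ) (hK : K.IsSymm)
    (h1 : K.mulVec (fun _ => 1) = 0)
    (hk : ∃ k : Fin (n + 1), (K.submatrix k.succAbove k.succAbove).PosDef) :
    (∀ j : Fin (n + 1), (K.submatrix j.succAbove j.succAbove).PosDef)
    ∧ K.PosSemidef
    ∧ ∀ a : Fin (n + 1) → ℝ, (a ⬝ᵥ K.mulVec a = 0 ↔ ∃ c : ℝ, ∀ i, a i = c) := by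
  obtain ⟨k, hkpd⟩ := hk
  -- quadratic form of zero-extension equals submatrix quadratic form
  have ext0 : ∀ (j : Fin (n+1)) (x : Fin n → ℝ),
      (Fin.insertNth j 0 x) ⬝ᵥ K.mulVec (Fin.insertNth j 0 x)
        = x ⬝ᵥ (K.submatrix j.succAbove j.succAbove).mulVec x := by
    intro j x
    simp only [dotProduct, mulVec, submatrix_apply]
    rw [Fin.sum_univ_succAbove _ j]
    simp [Fin.insertNth_apply_same, Fin.insertNth_apply_succAbove]
    refine Finset.sum_congr rfl fun i _ => ?_
    congr 1
    rw [Fin.sum_univ_succAbove _ j]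
    simp
  -- invariance under subtracting a constant
  have shift : ∀ (v : Fin (n+1) → ℝ) (c : ℝ),
      (fun i => v i - c) ⬝ᵥ K.mulVec (fun i => v i - c) = v ⬝ᵥ K.mulVec v := by
    intro v c
    have hKv : K.mulVec (fun i => v i - c) = K.mulVec v := by
      have : (fun i => v i - c) = v - c • (fun _ => (1:ℝ)) := by
        funext i; simp
      rw [this, Matrix.mulVec_sub, Matrix.mulVec_smul, h1]
      simp
    rw [hKv]
    have h1' : (fun _ : Fin (n+1) => (1:ℝ)) ⬝ᵥ K.mulVec v = 0 := by
      rw [Matrix.dotProduct_mulVec]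
      have : Matrix.vecMul (fun _ : Fin (n+1) => (1:ℝ)) K = 0 := by
        rw [← Matrix.mulVec_transpose, hK.eq, h1]
      rw [this]
      simp
    have : (fun i => v i - c) ⬝ᵥ K.mulVec v
        = v ⬝ᵥ K.mulVec v - c * ((fun _ : Fin (n+1) => (1:ℝ)) ⬝ᵥ K.mulVec v) := by
      simp [dotProduct, Finset.sum_sub_distrib, Finset.mul_sum, sub_mul]
    rw [this, h1', mul_zero, sub_zero]
  -- core: nonnegativity and equality case via k
  have core : ∀ v : Fin (n+1) → ℝ,
      0 ≤ v ⬝ᵥ K.mulVec v ∧ (v ⬝ᵥ K.mulVec v = 0 → ∀ i, v i = v k) := by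
    intro v
    set x : Fin n → ℝ := fun i => v (k.succAbove i) - v k with hx
    have hins : Fin.insertNth k 0 x = fun i => v i - v k := by
      funext i
      rcases eq_or_ne i k with rfl | hne
      · simp
      · obtain ⟨l, rfl⟩ := Fin.exists_succAbove_eq hne
        simp [hx]
    have key : v ⬝ᵥ K.mulVec v = x ⬝ᵥ (K.submatrix k.succAbove k.succAbove).mulVec x := by
      rw [← ext0 k x, hins, shift]
    constructor
    · rw [key]
      rcases eq_or_ne x 0 with h | h
      · simp [h]
      · exact le_of_lt (by simpa using hkpd.dotProduct_mulVec_pos h)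
    · intro h0 i
      rw [key] at h0
      by_contra hne
      rcases eq_or_ne x 0 with h | h
      · rcases eq_or_ne i k with rfl | hik
        · exact hne rfl
        · obtain ⟨l, rfl⟩ := Fin.exists_succAbove_eq hik
          have := congrFun h l
          simp [hx] at this
          exact hne (by linarith)
      · have := hkpd.dotProduct_mulVec_pos h
        simp [h0] at this
  refine ⟨?_, ?_, ?_⟩
  · intro j
    rw [posDef_iff_dotProduct_mulVec]
    refine ⟨?_, ?_⟩
    · rw [Matrix.IsHermitian, conjTranspose_eq_transpose_of_trivial]; exact hK.submatrix j.succAbove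
    · intro x hx
      have h0 := ext0 j x
      have hle := (core (Fin.insertNth j 0 x)).1
      have hne : (Fin.insertNth j 0 x) ⬝ᵥ K.mulVec (Fin.insertNth j 0 x) ≠ 0 := by
        intro h
        have hall := (core (Fin.insertNth j 0 x)).2 h
        apply hx
        funext i
        have hji := hall j
        have hi := hall (j.succAbove i)
        simp [Fin.insertNth_apply_same] at hji
        simp [Fin.insertNth_apply_succAbove] at hi
        simp [hi, ← hji]
      simpa [h0] using lt_of_le_of_ne hle (Ne.symm hne)
  · refine posSemidef_iff_dotProduct_mulVec.mpr ⟨by rw [Matrix.IsHermitian, conjTranspose_eq_transpose_of_trivial]; exact hK, fun x => by simpa using (core x).1⟩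
  · intro a
    constructor
    · intro h
      exact ⟨a k, (core a).2 h⟩
    · rintro ⟨c, hc⟩
      have : a = fun i => (fun _ : Fin (n+1) => c) i - 0 := by funext i; simp [hc i]
      rw [this, shift]
      have : K.mulVec (fun _ => c) = 0 := by
        have : (fun _ : Fin (n+1) => c) = c • (fun _ => (1:ℝ)) := by funext i; simp
        rw [this, Matrix.mulVec_smul, h1]; simp
      simp [this]
end

section
/- Let m ≥ 2, let K ∈ ℝ^{m×m} be symmetric and η ∈ ℝ^m, and suppose either (I) K is positive definite, or (II) K 1_m = 0_m, K_{−k,−k} is positive definite for some k, and 1_m^⊤ η + m ≥ 0. Then for every j ∈ {1,…,m} and every t ∈ ℝ, ∫_{Δ_{−m}°} x_j^t · exp(−(1/2) L(x)^⊤ K L(x) + η^⊤ L(x)) dx < ∞, where x_m := 1 − Σ_{i=1}^{m−1} x_i and L(x) = (log x_1, …, log x_{m−1}, log x_m). In particular, if X has density proportional to this kernel on the simplex, then log X_j has a finite moment generating function on all of ℝ, and is sub-exponential. -/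
open MeasureTheory Matrix Finset

/-- The open simplex `Δ_{-m}°` in `ℝ^n` (where `m = n+1`). -/
def simplexInt (n : ℕ) : Set (Fin n → ℝ) :=
  {x | (∀ i, 0 < x i) ∧ ∑ i, x i < 1}

/-- Profile the last coordinate: send `x ∈ ℝ^n` to `(x, 1 - ∑ x) ∈ ℝ^{n+1}`. -/
noncomputable def fullVec {n : ℕ} (x : Fin n → ℝ) : Fin (n + 1) → ℝ :=
  Fin.snoc x (1 - ∑ i, x i)

/-- Componentwise logarithm. -/
noncomputable def logVec {n : ℕ} (x : Fin n → ℝ) : Fin n → ℝ :=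
  fun i => Real.log (x i)

lemma quad_lower {d : ℕ} {M : Matrix (Fin d) (Fin d) ℝ} (hM : M.PosDef) :
    ∃ c > 0, ∀ v : Fin d → ℝ, c * (∑ i, v i ^ 2) ≤ v ⬝ᵥ M.mulVec v := by
  rcases Nat.eq_zero_or_pos d with hd | hd
  · refine ⟨1, one_pos, fun v => ?_⟩
    subst hd
    simp [dotProduct]
  · set Q : (Fin d → ℝ) → ℝ := fun v => v ⬝ᵥ M.mulVec v with hQ
    have hQc : Continuous Q := by
      unfold Q
      simp only [dotProduct, mulVec]
      exact continuous_finset_sum _ fun i _ =>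
        (continuous_apply i).mul (continuous_finset_sum _ fun l _ =>
          (continuous_const.mul (continuous_apply l)))
    have hNc : Continuous fun v : Fin d → ℝ => ∑ i, v i ^ 2 :=
      continuous_finset_sum _ fun i _ => (continuous_apply i).pow 2
    set S : Set (Fin d → ℝ) := {v | ∑ i, v i ^ 2 = 1} with hS
    have hclosed : IsClosed S := isClosed_eq hNc continuous_const
    have hbdd : Bornology.IsBounded S := by
      apply Bornology.IsBounded.subset (Metric.isBounded_closedBall (x := (0 : Fin d → ℝ)) (r := 1))
      intro v hv
      simp only [Metric.mem_closedBall, dist_zero_right]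
      rw [pi_norm_le_iff_of_nonneg zero_le_one]
      intro i
      have h1 : v i ^ 2 ≤ 1 := by
        have := Finset.single_le_sum (f := fun i => v i ^ 2) (fun i _ => sq_nonneg _)
          (Finset.mem_univ i)
        have h3 : ∑ i, v i ^ 2 = 1 := hv
        linarith
      rw [Real.norm_eq_abs, abs_le]
      constructor <;> nlinarith
    have hcompact : IsCompact S := Metric.isCompact_of_isClosed_isBounded hclosed hbdd
    have hne : S.Nonempty := by
      refine ⟨fun i => if i = ⟨0, hd⟩ then 1 else 0, ?_⟩
      simp only [hS, Set.mem_setOf_eq]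
      rw [Finset.sum_eq_single ⟨0, hd⟩]
      · simp
      · intro b _ hb; simp [hb]
      · simp
    obtain ⟨v₀, hv₀S, hmin⟩ := hcompact.exists_isMinOn hne hQc.continuousOn
    have hv₀ : v₀ ≠ 0 := by
      intro h0
      rw [h0] at hv₀S
      simp [hS] at hv₀S
    refine ⟨Q v₀, hM.dotProduct_mulVec_pos hv₀, fun v => ?_⟩
    by_cases hv : v = 0
    · subst hv; simp [hQ, Q]
    · set s : ℝ := Real.sqrt (∑ i, v i ^ 2) with hs
      have hsum_pos : 0 < ∑ i, v i ^ 2 := by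
        rcases Function.ne_iff.mp hv with ⟨i, hi⟩
        have h4 : 0 < v i ^ 2 := by
          have : v i ≠ 0 := hi
          positivity
        exact lt_of_lt_of_le h4 (Finset.single_le_sum (f := fun i => v i ^ 2)
          (fun i _ => sq_nonneg _) (Finset.mem_univ i))
      have hspos : 0 < s := Real.sqrt_pos.mpr hsum_pos
      have hs2 : s ^ 2 = ∑ i, v i ^ 2 := Real.sq_sqrt hsum_pos.le
      set w : Fin d → ℝ := s⁻¹ • v with hw
      have hwS : w ∈ S := by
        simp only [hS, Set.mem_setOf_eq, hw, Pi.smul_apply, smul_eq_mul, mul_pow,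
          ← Finset.mul_sum]
        rw [← hs2]
        field_simp
      have hvw : v = s • w := by
        rw [hw, smul_smul, mul_inv_cancel₀ hspos.ne', one_smul]
      have hQv : Q v = s ^ 2 * Q w := by
        rw [hvw]
        simp only [hQ]
        rw [Matrix.mulVec_smul, smul_dotProduct, dotProduct_smul]
        simp [smul_eq_mul]; ring
      have hminw : Q v₀ ≤ Q w := hmin hwS
      calc Q v₀ * (∑ i, v i ^ 2) = Q v₀ * s ^ 2 := by rw [hs2]
        _ ≤ Q w * s ^ 2 := by nlinarith [sq_nonneg s]
        _ = Q v := by rw [hQv]; ring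



lemma complete_square (c B s q lin A : ℝ) (hc : 0 < c) (hs : 0 ≤ s)
    (hq : c * s ^ 2 ≤ q) (hlin : lin ≤ A + B * s) :
    lin - (1 / 2) * q ≤ A + B ^ 2 / (2 * c) := by
  have h1 : B * s ≤ (1 / 2) * (c * s ^ 2) + B ^ 2 / (2 * c) := by
    rw [← sub_nonneg]
    have h2 : (1 / 2) * (c * s ^ 2) + B ^ 2 / (2 * c) - B * s = (c * s - B) ^ 2 / (2 * c) := by
      field_simp; ring
    rw [h2]; positivity
  linarith

lemma exponent_bound (n : ℕ) (K : Matrix (Fin (n + 1)) (Fin (n + 1)) ℝ) (hK : K.IsSymm)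
    (η : Fin (n + 1) → ℝ)
    (h : K.PosDef
      ∨ (K.mulVec (fun _ => 1) = 0
          ∧ (∃ k : Fin (n + 1), (K.submatrix k.succAbove k.succAbove).PosDef)))
    (j : Fin (n + 1)) (t : ℝ) :
    ∃ M : ℝ, ∀ u : Fin (n + 1) → ℝ, (∀ i, u i ≤ 0) →
      (∃ i, -Real.log (n + 1) ≤ u i) →
      t * u j + (-(1 / 2) * (u ⬝ᵥ K.mulVec u) + η ⬝ᵥ u) ≤ M := by
  rcases h with hpd | ⟨hK1, k, hpd⟩
  · obtain ⟨c, hc, hq⟩ := quad_lower hpd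
    refine ⟨(|t| + ∑ i, |η i|) ^ 2 / (2 * c), fun u hu _ => ?_⟩
    set B : ℝ := |t| + ∑ i, |η i| with hB
    have hB0 : 0 ≤ B := by positivity
    set s : ℝ := Real.sqrt (∑ i, u i ^ 2) with hs
    have hs0 : 0 ≤ s := Real.sqrt_nonneg _
    have hs2 : s ^ 2 = ∑ i, u i ^ 2 := Real.sq_sqrt (by positivity)
    have habs : ∀ i, |u i| ≤ s := by
      intro i
      rw [hs, ← Real.sqrt_sq_eq_abs]
      exact Real.sqrt_le_sqrt (Finset.single_le_sum (f := fun i => u i ^ 2)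
        (fun i _ => sq_nonneg _) (Finset.mem_univ i))
    have h1 : t * u j ≤ |t| * s := by
      calc t * u j ≤ |t * u j| := le_abs_self _
        _ = |t| * |u j| := abs_mul _ _
        _ ≤ |t| * s := mul_le_mul_of_nonneg_left (habs j) (abs_nonneg t)
    have h2 : η ⬝ᵥ u ≤ (∑ i, |η i|) * s := by
      rw [dotProduct, Finset.sum_mul]
      apply Finset.sum_le_sum
      intro i _
      calc η i * u i ≤ |η i * u i| := le_abs_self _
        _ = |η i| * |u i| := abs_mul _ _
        _ ≤ |η i| * s := mul_le_mul_of_nonneg_left (habs i) (abs_nonneg _)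
    have h3 : c * s ^ 2 ≤ u ⬝ᵥ K.mulVec u := by rw [hs2]; exact hq u
    have hfin := complete_square c B s (u ⬝ᵥ K.mulVec u) (t * u j + η ⬝ᵥ u) 0 hc hs0 h3
      (by rw [hB, add_mul, zero_add]; linarith)
    rw [hB] at hfin
    linarith
  · obtain ⟨c, hc, hq⟩ := quad_lower hpd
    set L : ℝ := Real.log (n + 1) with hL
    have hL0 : 0 ≤ L := Real.log_nonneg (by push_cast; linarith [Nat.cast_nonneg (α := ℝ) n])
    set T : ℝ := t + ∑ i, η i with hT
    set A : ℝ := |T| * L with hA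
    set B : ℝ := |t| + (∑ i, |η i|) + |T| with hB
    have hA0 : 0 ≤ A := by positivity
    have hB0 : 0 ≤ B := by positivity
    refine ⟨A + B ^ 2 / (2 * c), fun u hu hex => ?_⟩
    set a : ℝ := u k with ha
    set w : Fin (n + 1) → ℝ := fun i => u i - a with hw
    have hwk : w k = 0 := by simp [hw, ha]
    set s : ℝ := Real.sqrt (∑ p : Fin n, w (k.succAbove p) ^ 2) with hs
    have hs0 : 0 ≤ s := Real.sqrt_nonneg _
    have hs2 : s ^ 2 = ∑ p : Fin n, w (k.succAbove p) ^ 2 := Real.sq_sqrt (by positivity)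
    have habs : ∀ i, |w i| ≤ s := by
      intro i
      by_cases hik : i = k
      · rw [hik, hwk]; simpa using hs0
      · obtain ⟨p, hp⟩ := Fin.exists_succAbove_eq hik
        rw [← hp, ← Real.sqrt_sq_eq_abs]
        exact Real.sqrt_le_sqrt (Finset.single_le_sum (f := fun p => w (k.succAbove p) ^ 2)
          (fun _ _ => sq_nonneg _) (Finset.mem_univ p))
    have ha_le : a ≤ 0 := hu k
    have habsa : |a| ≤ L + s := by
      obtain ⟨i0, hi0⟩ := hex
      have hai : a = u i0 - w i0 := by simp [hw]
      have hw0 := abs_le.mp (habs i0)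
      rw [abs_le]
      constructor
      · rw [hai]; linarith [hw0.1, hw0.2]
      · linarith
    -- row and column sums vanish
    have hrow : ∀ i, ∑ l, K i l = 0 := by
      intro i
      have := congrFun hK1 i
      simpa [Matrix.mulVec, dotProduct] using this
    have hcol : ∀ l, ∑ i, K i l = 0 := by
      intro l
      calc ∑ i, K i l = ∑ i, K l i := Finset.sum_congr rfl (fun i _ => (hK.apply i l).symm ▸ rfl)
        _ = 0 := hrow l
    -- quadratic form identity
    have hone : (fun _ : Fin (n + 1) => a) = a • (fun _ => (1 : ℝ)) := by
      funext i; simp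
    have hu_eq : u = w + a • (fun _ => (1 : ℝ)) := by
      funext i; simp [hw]
    have hmv : K.mulVec u = K.mulVec w := by
      rw [hu_eq, Matrix.mulVec_add, Matrix.mulVec_smul, hK1]
      simp
    have hvm1 : Matrix.vecMul (fun _ => (1 : ℝ)) K = 0 := by
      funext l
      have := hcol l
      simpa [Matrix.vecMul, dotProduct] using this
    have h1v : (fun _ : Fin (n + 1) => (1 : ℝ)) ⬝ᵥ K.mulVec w = 0 := by
      rw [Matrix.dotProduct_mulVec, hvm1, zero_dotProduct]
    have hquad : u ⬝ᵥ K.mulVec u = w ⬝ᵥ K.mulVec w := by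
      rw [hmv]
      conv_lhs => rw [hu_eq]
      rw [add_dotProduct, smul_dotProduct, h1v, smul_zero, add_zero]
    have hsub : w ⬝ᵥ K.mulVec w
        = (fun p => w (k.succAbove p)) ⬝ᵥ
          (K.submatrix k.succAbove k.succAbove).mulVec (fun p => w (k.succAbove p)) := by
      simp only [dotProduct, Matrix.mulVec, Matrix.submatrix_apply]
      rw [Fin.sum_univ_succAbove (fun i => w i * ∑ l, K i l * w l) k, hwk, zero_mul, zero_add]
      apply Finset.sum_congr rfl
      intro p _
      congr 1
      rw [Fin.sum_univ_succAbove (fun l => K (k.succAbove p) l * w l) k, hwk, mul_zero, zero_add]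
    have h3 : c * s ^ 2 ≤ u ⬝ᵥ K.mulVec u := by
      rw [hquad, hsub, hs2]
      exact hq _
    -- linear part
    have hlin : t * u j + η ⬝ᵥ u = t * w j + (∑ i, η i * w i) + T * a := by
      have huj : u j = w j + a := by simp [hw]
      have hdu : η ⬝ᵥ u = (∑ i, η i * w i) + (∑ i, η i) * a := by
        rw [dotProduct]
        calc ∑ i, η i * u i = ∑ i, (η i * w i + η i * a) :=
              Finset.sum_congr rfl (fun i _ => by simp only [hw]; ring)
          _ = (∑ i, η i * w i) + ∑ i, η i * a := Finset.sum_add_distrib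
          _ = (∑ i, η i * w i) + (∑ i, η i) * a := by rw [← Finset.sum_mul]
      rw [huj, hdu, hT]; ring
    have h4 : t * w j ≤ |t| * s :=
      calc t * w j ≤ |t * w j| := le_abs_self _
        _ = |t| * |w j| := abs_mul _ _
        _ ≤ |t| * s := mul_le_mul_of_nonneg_left (habs j) (abs_nonneg t)
    have h5 : (∑ i, η i * w i) ≤ (∑ i, |η i|) * s := by
      rw [Finset.sum_mul]
      apply Finset.sum_le_sum
      intro i _
      calc η i * w i ≤ |η i * w i| := le_abs_self _
        _ = |η i| * |w i| := abs_mul _ _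
        _ ≤ |η i| * s := mul_le_mul_of_nonneg_left (habs i) (abs_nonneg _)
    have h6 : T * a ≤ |T| * (L + s) :=
      calc T * a ≤ |T * a| := le_abs_self _
        _ = |T| * |a| := abs_mul _ _
        _ ≤ |T| * (L + s) := mul_le_mul_of_nonneg_left habsa (abs_nonneg _)
    have hfin := complete_square c B s (u ⬝ᵥ K.mulVec u) (t * u j + η ⬝ᵥ u) A hc hs0 h3
      (by rw [hlin, hA, hB]; nlinarith [h4, h5, h6, abs_nonneg T, hs0, hL0])
    linarith

lemma continuous_fullVec {n : ℕ} : Continuous (fullVec (n := n)) := by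
  apply continuous_pi
  intro i
  induction i using Fin.lastCases with
  | last =>
    simp only [fullVec, Fin.snoc_last]
    exact continuous_const.sub (continuous_finset_sum _ fun i _ => continuous_apply i)
  | cast p =>
    simp only [fullVec, Fin.snoc_castSucc]
    exact continuous_apply p

lemma isOpen_simplexInt (n : ℕ) : IsOpen (simplexInt n) := by
  have h1 : IsOpen {x : Fin n → ℝ | ∀ i, 0 < x i} := by
    rw [Set.setOf_forall]
    exact isOpen_iInter_of_finite fun i => isOpen_lt continuous_const (continuous_apply i)
  have h2 : IsOpen {x : Fin n → ℝ | ∑ i, x i < 1} :=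
    isOpen_lt (continuous_finset_sum _ fun i _ => continuous_apply i) continuous_const
  exact h1.inter h2

lemma fullVec_pos {n : ℕ} {x : Fin n → ℝ} (hx : x ∈ simplexInt n) (i : Fin (n + 1)) :
    0 < fullVec x i := by
  obtain ⟨h1, h2⟩ := hx
  induction i using Fin.lastCases with
  | last => simp only [fullVec, Fin.snoc_last]; linarith
  | cast p => simp only [fullVec, Fin.snoc_castSucc]; exact h1 p

lemma fullVec_sum {n : ℕ} (x : Fin n → ℝ) : ∑ i, fullVec x i = 1 := by
  rw [Fin.sum_univ_castSucc]
  simp only [fullVec, Fin.snoc_castSucc, Fin.snoc_last]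
  ring

lemma fullVec_le_one {n : ℕ} {x : Fin n → ℝ} (hx : x ∈ simplexInt n) (i : Fin (n + 1)) :
    fullVec x i ≤ 1 := by
  have h := fullVec_sum x
  have h2 := Finset.single_le_sum (f := fun i => fullVec x i)
    (fun i _ => (fullVec_pos hx i).le) (Finset.mem_univ i)
  linarith

lemma fullVec_exists_ge {n : ℕ} {x : Fin n → ℝ} (hx : x ∈ simplexInt n) :
    ∃ i, ((n : ℝ) + 1)⁻¹ ≤ fullVec x i := by
  by_contra hcon
  push_neg at hcon
  have h1 : ∑ i, fullVec x i < ∑ _i : Fin (n + 1), ((n : ℝ) + 1)⁻¹ :=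
    Finset.sum_lt_sum_of_nonempty ⟨0, Finset.mem_univ 0⟩ (fun i _ => hcon i)
  rw [fullVec_sum, Finset.sum_const, Finset.card_univ, Fintype.card_fin] at h1
  have : ((n : ℝ) + 1) ≠ 0 := by positivity
  rw [nsmul_eq_mul] at h1
  push_cast at h1
  rw [mul_inv_cancel₀ this] at h1
  exact lt_irrefl 1 h1

/-- Under condition (I) or (II) of Theorem 4.3, all moments `E[X_j^t]`, `t ∈ ℝ`, of the
log–log model are finite: `x_j^t` times the kernel is integrable over the simplex. -/
theorem loglog_all_moments_finite (n : ℕ) (hn : 1 ≤ n)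
    (K : Matrix (Fin (n + 1)) (Fin (n + 1)) ℝ) (hK : K.IsSymm) (η : Fin (n + 1) → ℝ)
    (h : K.PosDef
      ∨ (K.mulVec (fun _ => 1) = 0
          ∧ (∃ k : Fin (n + 1), (K.submatrix k.succAbove k.succAbove).PosDef)
          ∧ 0 ≤ (∑ i, η i) + ((n : ℝ) + 1)))
    (j : Fin (n + 1)) (t : ℝ) :
    IntegrableOn (fun x : Fin n → ℝ =>
      fullVec x j ^ t *
        Real.exp (-(1 / 2) * (logVec (fullVec x) ⬝ᵥ K.mulVec (logVec (fullVec x)))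
          + η ⬝ᵥ logVec (fullVec x))) (simplexInt n) := by
  have hmeas_s : MeasurableSet (simplexInt n) := (isOpen_simplexInt n).measurableSet
  have h' : K.PosDef
      ∨ (K.mulVec (fun _ => 1) = 0
          ∧ (∃ k : Fin (n + 1), (K.submatrix k.succAbove k.succAbove).PosDef)) := by
    rcases h with h | ⟨h1, h2, _⟩
    · exact Or.inl h
    · exact Or.inr ⟨h1, h2⟩
  obtain ⟨M, hM⟩ := exponent_bound n K hK η h' j t
  set F : (Fin n → ℝ) → ℝ := fun x =>
    Real.exp (t * logVec (fullVec x) j +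
      (-(1 / 2) * (logVec (fullVec x) ⬝ᵥ K.mulVec (logVec (fullVec x)))
        + η ⬝ᵥ logVec (fullVec x))) with hF
  -- measurability of F
  have hml : ∀ i : Fin (n + 1), Measurable fun x : Fin n → ℝ => Real.log (fullVec x i) :=
    fun i => Real.measurable_log.comp ((continuous_apply i).comp continuous_fullVec).measurable
  have hFmeas : Measurable F := by
    apply Real.measurable_exp.comp
    simp only [logVec, dotProduct, Matrix.mulVec]
    apply Measurable.add
    · exact (hml j).const_mul t
    · apply Measurable.add
      · apply Measurable.const_mul
        apply Finset.measurable_sum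
        intro i _
        apply Measurable.mul (hml i)
        apply Finset.measurable_sum
        intro l _
        exact (hml l).const_mul (K i l)
      · apply Finset.measurable_sum
        intro i _
        exact (hml i).const_mul (η i)
  -- finite volume
  have hsub : simplexInt n ⊆ Set.pi Set.univ (fun _ : Fin n => Set.Ioo (0 : ℝ) 1) := by
    intro x hx
    rw [Set.mem_pi]
    intro i _
    obtain ⟨h1, h2⟩ := hx
    refine ⟨h1 i, ?_⟩
    have h3 := Finset.single_le_sum (f := fun i => x i) (fun i _ => (h1 i).le)
      (Finset.mem_univ i)
    calc x i ≤ ∑ i, x i := h3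
      _ < 1 := h2
  have hvolpi : volume (Set.pi Set.univ fun _ : Fin n => Set.Ioo (0 : ℝ) 1) = 1 := by
    rw [volume_pi_pi]
    simp [Real.volume_Ioo]
  have hvol : volume (simplexInt n) ≠ ⊤ := by
    refine ne_of_lt (lt_of_le_of_lt (measure_mono hsub) ?_)
    rw [hvolpi]
    exact ENNReal.one_lt_top
  -- the bound
  have hbdd : ∀ᵐ x ∂(volume.restrict (simplexInt n)), ‖F x‖ ≤ Real.exp M := by
    rw [ae_restrict_iff' hmeas_s]
    apply ae_of_all
    intro x hx
    rw [hF]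
    simp only [Real.norm_eq_abs, Real.abs_exp]
    apply Real.exp_le_exp.mpr
    apply hM (logVec (fullVec x))
    · intro i
      exact Real.log_nonpos (fullVec_pos hx i).le (fullVec_le_one hx i)
    · obtain ⟨i, hi⟩ := fullVec_exists_ge hx
      refine ⟨i, ?_⟩
      have hpos : (0 : ℝ) < ((n : ℝ) + 1)⁻¹ := by positivity
      have := (Real.log_le_log_iff hpos (fullVec_pos hx i)).mpr hi
      rwa [Real.log_inv] at this
  have hFint : IntegrableOn F (simplexInt n) :=
    Measure.integrableOn_of_bounded hvol hFmeas.aestronglyMeasurable hbdd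
  apply hFint.congr_fun _ hmeas_s
  intro x hx
  rw [hF]
  simp only
  rw [Real.rpow_def_of_pos (fullVec_pos hx j), ← Real.exp_add]
  congr 1
  have : logVec (fullVec x) j = Real.log (fullVec x j) := rfl
  rw [this]
  ring
end

section
/- Let m ≥ 2, let K ∈ ℝ^{m×m} be symmetric with K 1_m = 0_m, K positive semi-definite, and let η ∈ ℝ^m with η_i > −1 for all i. Then for every j ∈ {1,…,m} and every t > −1 − η_j, ∫_{Δ_{−m}°} x_j^t · exp(−(1/2) L(x)^⊤ K L(x) + η^⊤ L(x)) dx < ∞, where x_m := 1 − Σ_{i=1}^{m−1} x_i and L(x) = (log x_1, …, log x_{m−1}, log x_m). In particular, the moment generating function of log X_j under the corresponding density is finite in a neighborhood of 0. -/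
open MeasureTheory Matrix Finset

section Aux

variable {n : ℕ}

lemma fullVec_castSucc (x : Fin n → ℝ) (i : Fin n) :
    fullVec x i.castSucc = x i := Fin.snoc_castSucc _ _ _

lemma fullVec_last (x : Fin n → ℝ) :
    fullVec x (Fin.last n) = 1 - ∑ i, x i := Fin.snoc_last _ _

lemma sum_fullVec (x : Fin n → ℝ) : ∑ i, fullVec x i = 1 := by
  rw [Fin.sum_univ_castSucc]
  simp [fullVec_castSucc, fullVec_last]

lemma mem_simplexInt_iff (x : Fin n → ℝ) :
    x ∈ simplexInt n ↔ ∀ i, 0 < fullVec x i := by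
  constructor
  · rintro ⟨h1, h2⟩ i
    refine Fin.lastCases ?_ ?_ i
    · rw [fullVec_last]; linarith
    · intro i; rw [fullVec_castSucc]; exact h1 i
  · intro h
    refine ⟨fun i => by simpa [fullVec_castSucc] using h i.castSucc, ?_⟩
    have := h (Fin.last n)
    rw [fullVec_last] at this; linarith

lemma continuous_fullVec_s10 (i : Fin (n+1)) :
    Continuous (fun x : Fin n → ℝ => fullVec x i) := by
  refine Fin.lastCases ?_ ?_ i
  · simp only [fullVec_last]
    exact continuous_const.sub (continuous_finset_sum _ fun i _ => continuous_apply i)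
  · intro i; simp only [fullVec_castSucc]; exact continuous_apply i

/-- The affine involution of `ℝ^n` replacing the `k`-th coordinate by `1 - ∑ x`. -/
noncomputable def swapLast (k : Fin n) (x : Fin n → ℝ) : Fin n → ℝ :=
  fun i => if i = k then 1 - ∑ j, x j else x i

lemma swapLast_involutive (k : Fin n) : Function.Involutive (swapLast k) := by
  intro x
  funext i
  simp only [swapLast]
  by_cases h : i = k
  · subst h
    simp only [if_pos rfl]
    have : ∑ j, (if j = i then 1 - ∑ l, x l else x j) = 1 - x i := by
      rw [← Finset.sum_erase_add _ _ (Finset.mem_univ i), if_pos rfl]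
      rw [Finset.sum_congr rfl (fun j hj => if_neg (Finset.ne_of_mem_erase hj)),
        ← Finset.sum_erase_add _ x (Finset.mem_univ i)]
      ring
    simp [this]
  · simp [h]

lemma measurePreserving_swapLast (k : Fin n) :
    MeasurePreserving (swapLast k) (volume : Measure (Fin n → ℝ)) volume := by
  classical
  set M : Matrix (Fin n) (Fin n) ℝ := Matrix.updateRow 1 k (fun _ => -1) with hM
  have hdet : M.det = -1 := by
    have : M = (Matrix.updateCol (1 : Matrix (Fin n) (Fin n) ℝ)ᵀ k (fun _ => -1))ᵀ := by
      rw [Matrix.updateCol_transpose, Matrix.transpose_transpose]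
    rw [this, Matrix.det_transpose, ← Matrix.cramer_apply,
      Matrix.transpose_one, Matrix.cramer_eq_adjugate_mulVec, Matrix.adjugate_one,
      Matrix.one_mulVec]
  have hlin : MeasurePreserving (Matrix.toLin' M) (volume : Measure (Fin n → ℝ)) volume := by
    refine ⟨(Matrix.toLin' M).continuous_of_finiteDimensional.measurable, ?_⟩
    rw [Real.map_matrix_volume_pi_eq_smul_volume_pi (by rw [hdet]; norm_num), hdet]
    norm_num
  have htrans : MeasurePreserving (fun y : Fin n → ℝ => (fun i => if i = k then (1:ℝ) else 0) + y)
      (volume : Measure (Fin n → ℝ)) volume := measurePreserving_add_left volume _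
  have : swapLast k = (fun y : Fin n → ℝ => (fun i => if i = k then (1:ℝ) else 0) + y) ∘
      (Matrix.toLin' M) := by
    funext x i
    simp only [Function.comp_apply, Pi.add_apply, Matrix.toLin'_apply, swapLast]
    by_cases h : i = k
    · subst h
      simp [Matrix.mulVec, dotProduct, M, Matrix.updateRow_self, sub_eq_add_neg,
        ← Finset.sum_neg_distrib]
    · simp only [if_neg h]
      simp [Matrix.mulVec, dotProduct, M, Matrix.updateRow_ne h, Matrix.one_apply,
        ite_mul, Finset.sum_ite_eq']
  rw [this]
  exact htrans.comp hlin

/-- `swapLast k` as a homeomorphism. -/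
noncomputable def swapLastHomeo (k : Fin n) : Homeomorph (Fin n → ℝ) (Fin n → ℝ) where
  toFun := swapLast k
  invFun := swapLast k
  left_inv := swapLast_involutive k
  right_inv := swapLast_involutive k
  continuous_toFun := by
    apply continuous_pi
    intro i
    by_cases h : i = k
    · subst h
      simp only [swapLast, if_pos rfl]
      exact continuous_const.sub (continuous_finset_sum _ fun i _ => continuous_apply i)
    · simp only [swapLast, if_neg h]
      exact continuous_apply i
  continuous_invFun := by
    apply continuous_pi
    intro i
    by_cases h : i = k
    · subst h
      simp only [swapLast, if_pos rfl]
      exact continuous_const.sub (continuous_finset_sum _ fun i _ => continuous_apply i)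
    · simp only [swapLast, if_neg h]
      exact continuous_apply i

lemma measurableEmbedding_swapLast (k : Fin n) :
    MeasurableEmbedding (swapLast k) :=
  (swapLastHomeo k).toMeasurableEquiv.measurableEmbedding

lemma fullVec_swapLast (k : Fin n) (x : Fin n → ℝ) (i : Fin (n+1)) :
    fullVec (swapLast k x) i = fullVec x (Equiv.swap k.castSucc (Fin.last n) i) := by
  have hsum : ∑ j, swapLast k x j = 1 - x k := by
    rw [← Finset.sum_erase_add _ _ (Finset.mem_univ k)]
    simp only [swapLast, if_pos rfl]
    rw [Finset.sum_congr rfl (fun j hj => if_neg (Finset.ne_of_mem_erase hj)),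
      ← Finset.sum_erase_add _ x (Finset.mem_univ k)]
    simp only [if_pos trivial]
    ring
  refine Fin.lastCases ?_ ?_ i
  · rw [fullVec_last, hsum, Equiv.swap_apply_right, fullVec_castSucc]
    ring
  · intro i
    rw [fullVec_castSucc]
    by_cases h : i = k
    · subst h
      rw [Equiv.swap_apply_left, fullVec_last]
      simp [swapLast]
    · have h1 : i.castSucc ≠ k.castSucc := fun hc => h (Fin.castSucc_injective n hc)
      have h2 : i.castSucc ≠ Fin.last n := Fin.castSucc_lt_last i |>.ne
      rw [Equiv.swap_apply_of_ne_of_ne h1 h2, fullVec_castSucc]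
      simp [swapLast, h]

lemma measurableSet_slice (c : ℝ) (k : Fin (n+1)) :
    MeasurableSet {x : Fin n → ℝ | x ∈ simplexInt n ∧ c ≤ fullVec x k} := by
  apply MeasurableSet.inter
  · have : IsOpen (simplexInt n) := by
      have : simplexInt n = (⋂ i, {x : Fin n → ℝ | 0 < x i}) ∩ {x | ∑ i, x i < 1} := by
        ext x; simp [simplexInt, Set.mem_iInter]
      rw [this]
      exact (isOpen_iInter_of_finite fun i =>
        isOpen_lt continuous_const (continuous_apply i)).inter
        (isOpen_lt (continuous_finset_sum _ fun i _ => continuous_apply i) continuous_const)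
    exact this.measurableSet
  · exact measurableSet_le measurable_const (continuous_fullVec_s10 k).measurable

lemma measurableSet_simplexInt : MeasurableSet (simplexInt n) := by
  have : IsOpen (simplexInt n) := by
    have : simplexInt n = (⋂ i, {x : Fin n → ℝ | 0 < x i}) ∩ {x | ∑ i, x i < 1} := by
      ext x; simp [simplexInt, Set.mem_iInter]
    rw [this]
    exact (isOpen_iInter_of_finite fun i =>
      isOpen_lt continuous_const (continuous_apply i)).inter
      (isOpen_lt (continuous_finset_sum _ fun i _ => continuous_apply i) continuous_const)
  exact this.measurableSet

lemma measurable_prod_rpow (β : Fin (n+1) → ℝ) :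
    Measurable (fun x : Fin n → ℝ => ∏ i, fullVec x i ^ β i) :=
  Finset.measurable_prod _ fun i _ => by
    have h : Measurable fun s : ℝ => s ^ β i := by measurability
    exact h.comp (continuous_fullVec_s10 i).measurable

lemma integrableOn_rpow_Ioo {r : ℝ} (hr : -1 < r) :
    IntegrableOn (fun s : ℝ => s ^ r) (Set.Ioo 0 1) := by
  have := intervalIntegral.intervalIntegrable_rpow' (a := 0) (b := 1) hr
  rw [intervalIntegrable_iff_integrableOn_Ioo_of_le (by norm_num)] at this
  exact this

/-- Integrability of the Dirichlet-type integrand on the part of the simplex where the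
last coordinate is bounded below. -/
lemma integrableOn_prod_rpow_lastBig (β : Fin (n+1) → ℝ) (hβ : ∀ i, -1 < β i)
    (c : ℝ) (hc : 0 < c) :
    IntegrableOn (fun x : Fin n → ℝ => ∏ i, fullVec x i ^ β i)
      {x | x ∈ simplexInt n ∧ c ≤ fullVec x (Fin.last n)} := by
  classical
  set C : ℝ := max (c ^ β (Fin.last n)) 1 with hC
  set F : Fin n → ℝ → ℝ :=
    fun i => (Set.Ioo (0:ℝ) 1).indicator (fun s => s ^ β i.castSucc) with hF
  have hFint : ∀ i, Integrable (F i) := by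
    intro i
    rw [hF]
    rw [integrable_indicator_iff measurableSet_Ioo]
    exact integrableOn_rpow_Ioo (hβ _)
  have hG : Integrable (fun x : Fin n → ℝ => C * ∏ i, F i (x i)) := by
    have : Integrable (fun x : Fin n → ℝ => ∏ i, F i (x i)) := by
      rw [volume_pi]
      exact Integrable.fintype_prod hFint
    exact this.const_mul C
  refine Integrable.mono' (hG.restrict) ((measurable_prod_rpow β).aestronglyMeasurable) ?_
  rw [ae_restrict_iff' (measurableSet_slice c (Fin.last n))]
  filter_upwards with x hx
  obtain ⟨⟨hpos, hsum⟩, hlast⟩ := hx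
  have hmem : ∀ i : Fin n, x i ∈ Set.Ioo (0:ℝ) 1 := by
    intro i
    refine ⟨hpos i, lt_of_le_of_lt ?_ hsum⟩
    exact Finset.single_le_sum (fun j _ => (hpos j).le) (Finset.mem_univ i)
  have hprod_nonneg : 0 ≤ ∏ i : Fin n, x i ^ β i.castSucc :=
    Finset.prod_nonneg fun i _ => Real.rpow_nonneg (hpos i).le _
  have hfsplit : ∏ i, fullVec x i ^ β i =
      (∏ i : Fin n, x i ^ β i.castSucc) * fullVec x (Fin.last n) ^ β (Fin.last n) := by
    rw [Fin.prod_univ_castSucc]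
    simp [fullVec_castSucc]
  have hlast0 : 0 < fullVec x (Fin.last n) := lt_of_lt_of_le hc hlast
  have hlast1 : fullVec x (Fin.last n) ≤ 1 := by
    rw [fullVec_last]
    have : 0 ≤ ∑ i, x i := Finset.sum_nonneg fun i _ => (hpos i).le
    linarith
  have hlastC : fullVec x (Fin.last n) ^ β (Fin.last n) ≤ C := by
    rcases le_or_gt 0 (β (Fin.last n)) with h | h
    · exact le_trans (Real.rpow_le_one hlast0.le hlast1 h) (le_max_right _ _)
    · exact le_trans (Real.rpow_le_rpow_of_nonpos hc hlast h.le) (le_max_left _ _)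
  have hf_nonneg : 0 ≤ ∏ i, fullVec x i ^ β i := by
    rw [hfsplit]
    exact mul_nonneg hprod_nonneg (Real.rpow_nonneg hlast0.le _)
  rw [Real.norm_eq_abs, abs_of_nonneg hf_nonneg, hfsplit]
  have hFeq : ∀ i : Fin n, F i (x i) = x i ^ β i.castSucc := fun i =>
    Set.indicator_of_mem (hmem i) _
  calc (∏ i : Fin n, x i ^ β i.castSucc) * fullVec x (Fin.last n) ^ β (Fin.last n)
      ≤ (∏ i : Fin n, x i ^ β i.castSucc) * C := by
        exact mul_le_mul_of_nonneg_left hlastC hprod_nonneg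
    _ = C * ∏ i, F i (x i) := by
        rw [mul_comm]
        congr 1
        exact Finset.prod_congr rfl fun i _ => (hFeq i).symm

/-- Same, with any of the `n+1` coordinates bounded below. -/
lemma integrableOn_prod_rpow_bigCoord (β : Fin (n+1) → ℝ) (hβ : ∀ i, -1 < β i)
    (c : ℝ) (hc : 0 < c) (k : Fin (n+1)) :
    IntegrableOn (fun x : Fin n → ℝ => ∏ i, fullVec x i ^ β i)
      {x | x ∈ simplexInt n ∧ c ≤ fullVec x k} := by
  refine Fin.lastCases ?_ ?_ k
  · exact integrableOn_prod_rpow_lastBig β hβ c hc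
  · intro k
    set σ := Equiv.swap k.castSucc (Fin.last n) with hσ
    have hσσ : σ.symm = σ := Equiv.symm_swap _ _
    have key := integrableOn_prod_rpow_lastBig (fun i => β (σ i)) (fun i => hβ _) c hc
    rw [← (measurePreserving_swapLast k).integrableOn_comp_preimage
      (measurableEmbedding_swapLast k)]
    have hpre : swapLast k ⁻¹' {x : Fin n → ℝ | x ∈ simplexInt n ∧ c ≤ fullVec x k.castSucc}
        = {x : Fin n → ℝ | x ∈ simplexInt n ∧ c ≤ fullVec x (Fin.last n)} := by
      ext x
      simp only [Set.mem_preimage, Set.mem_setOf_eq, mem_simplexInt_iff]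
      constructor
      · rintro ⟨h1, h2⟩
        refine ⟨fun i => ?_, ?_⟩
        · have := h1 (σ i)
          rwa [fullVec_swapLast, ← hσ, Equiv.swap_apply_self] at this
        · rwa [fullVec_swapLast, Equiv.swap_apply_left] at h2
      · rintro ⟨h1, h2⟩
        refine ⟨fun i => by rw [fullVec_swapLast]; exact h1 _, ?_⟩
        rw [fullVec_swapLast, Equiv.swap_apply_left]; exact h2
    have hcomp : (fun x : Fin n → ℝ => ∏ i, fullVec x i ^ β i) ∘ swapLast k
        = fun x : Fin n → ℝ => ∏ i, fullVec x i ^ β (σ i) := by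
      funext x
      simp only [Function.comp_apply]
      rw [Fintype.prod_equiv σ (fun i => fullVec (swapLast k x) i ^ β i)
        (fun i => fullVec x i ^ β (σ i)) (fun i => ?_)]
      simp only [fullVec_swapLast, hσ, Equiv.swap_apply_self]
    rw [hpre, hcomp]
    exact key

/-- Integrability of the Dirichlet-type integrand on the whole open simplex. -/
lemma integrableOn_prod_rpow_simplex (β : Fin (n+1) → ℝ) (hβ : ∀ i, -1 < β i) :
    IntegrableOn (fun x : Fin n → ℝ => ∏ i, fullVec x i ^ β i) (simplexInt n) := by
  classical
  set c : ℝ := 1 / (n + 1) with hc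
  have hc0 : 0 < c := by positivity
  have hcover : simplexInt n ⊆
      ⋃ k ∈ (Finset.univ : Finset (Fin (n+1))),
        {x : Fin n → ℝ | x ∈ simplexInt n ∧ c ≤ fullVec x k} := by
    intro x hx
    have hex : ∃ k, c ≤ fullVec x k := by
      by_contra hcon
      push_neg at hcon
      have hlt : ∑ i, fullVec x i < ∑ _i : Fin (n+1), c :=
        Finset.sum_lt_sum_of_nonempty Finset.univ_nonempty fun i _ => hcon i
      rw [sum_fullVec, Finset.sum_const, Finset.card_univ, Fintype.card_fin] at hlt
      have : ((n : ℝ) + 1) * c = 1 := by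
        rw [hc]; field_simp
      rw [nsmul_eq_mul] at hlt
      push_cast at hlt
      linarith
    obtain ⟨k, hk⟩ := hex
    exact Set.mem_biUnion (Finset.mem_univ k) ⟨hx, hk⟩
  refine IntegrableOn.mono_set ?_ hcover
  rw [integrableOn_finset_iUnion]
  exact fun k _ => integrableOn_prod_rpow_bigCoord β hβ c hc0 k

end Aux

/-- Under condition (III) of Theorem 4.3 (`K 1 = 0`, `K ⪰ 0`, `η ≻ -1`), the moment
`E[X_j^t]` of the log–log model is finite for every `t > -1 - η_j`. -/
theorem loglog_moments_finite_posSemidef (n : ℕ) (hn : 1 ≤ n)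
    (K : Matrix (Fin (n + 1)) (Fin (n + 1)) ℝ) (hK : K.IsSymm)
    (h1 : K.mulVec (fun _ => 1) = 0) (hpsd : K.PosSemidef)
    (η : Fin (n + 1) → ℝ) (hη : ∀ i, -1 < η i)
    (j : Fin (n + 1)) (t : ℝ) (ht : -1 - η j < t) :
    IntegrableOn (fun x : Fin n → ℝ =>
      fullVec x j ^ t *
        Real.exp (-(1 / 2) * (logVec (fullVec x) ⬝ᵥ K.mulVec (logVec (fullVec x)))
          + η ⬝ᵥ logVec (fullVec x))) (simplexInt n) := by
  set β : Fin (n + 1) → ℝ := fun i => η i + if i = j then t else 0 with hβdef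
  have hβ : ∀ i, -1 < β i := by
    intro i
    by_cases h : i = j
    · subst h
      show -1 < η i + if i = i then t else 0
      split
      · linarith
      · next hne => exact absurd rfl hne
    · simp only [hβdef, if_neg h, add_zero]; exact hη i
  have hg := integrableOn_prod_rpow_simplex β hβ
  -- measurability of the integrand
  have hlog : ∀ i : Fin (n+1), Measurable fun x : Fin n → ℝ => Real.log (fullVec x i) :=
    fun i => Real.measurable_log.comp (continuous_fullVec_s10 i).measurable
  have hquad : Measurable fun x : Fin n → ℝ =>
      logVec (fullVec x) ⬝ᵥ K.mulVec (logVec (fullVec x)) := by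
    simp only [dotProduct, Matrix.mulVec, logVec]
    exact Finset.measurable_sum _ fun i _ =>
      (hlog i).mul (Finset.measurable_sum _ fun l _ => measurable_const.mul (hlog l))
  have hlin : Measurable fun x : Fin n → ℝ => η ⬝ᵥ logVec (fullVec x) := by
    simp only [dotProduct, logVec]
    exact Finset.measurable_sum _ fun i _ => measurable_const.mul (hlog i)
  have hrpowt : Measurable fun s : ℝ => s ^ t := by measurability
  have hfmeas : Measurable (fun x : Fin n → ℝ =>
      fullVec x j ^ t *
        Real.exp (-(1 / 2) * (logVec (fullVec x) ⬝ᵥ K.mulVec (logVec (fullVec x)))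
          + η ⬝ᵥ logVec (fullVec x))) :=
    (hrpowt.comp (continuous_fullVec_s10 j).measurable).mul
      (Real.measurable_exp.comp ((measurable_const.mul hquad).add hlin))
  refine Integrable.mono' hg hfmeas.aestronglyMeasurable ?_
  rw [ae_restrict_iff' measurableSet_simplexInt]
  filter_upwards with x hx
  have hpos : ∀ i, 0 < fullVec x i := (mem_simplexInt_iff x).1 hx
  have hQ : 0 ≤ logVec (fullVec x) ⬝ᵥ K.mulVec (logVec (fullVec x)) := by
    have := hpsd.dotProduct_mulVec_nonneg (logVec (fullVec x))
    simpa using this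
  have hfn : 0 ≤ fullVec x j ^ t * Real.exp
      (-(1 / 2) * (logVec (fullVec x) ⬝ᵥ K.mulVec (logVec (fullVec x)))
        + η ⬝ᵥ logVec (fullVec x)) :=
    mul_nonneg (Real.rpow_nonneg (hpos j).le _) (Real.exp_nonneg _)
  rw [Real.norm_eq_abs, abs_of_nonneg hfn]
  have hexp_le : Real.exp (-(1 / 2) * (logVec (fullVec x) ⬝ᵥ K.mulVec (logVec (fullVec x)))
        + η ⬝ᵥ logVec (fullVec x)) ≤ Real.exp (η ⬝ᵥ logVec (fullVec x)) := by
    apply Real.exp_le_exp.2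
    linarith
  have hexp_eq : Real.exp (η ⬝ᵥ logVec (fullVec x)) = ∏ i, fullVec x i ^ η i := by
    have : η ⬝ᵥ logVec (fullVec x) = ∑ i, Real.log (fullVec x i) * η i := by
      simp only [dotProduct, logVec]
      exact Finset.sum_congr rfl fun i _ => mul_comm _ _
    rw [this, Real.exp_sum]
    exact Finset.prod_congr rfl fun i _ => (Real.rpow_def_of_pos (hpos i) _).symm
  have hsplit : ∏ i, fullVec x i ^ β i =
      fullVec x j ^ t * ∏ i, fullVec x i ^ η i := by
    have h1 : ∀ i, fullVec x i ^ β i =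
        fullVec x i ^ η i * fullVec x i ^ (if i = j then t else 0) := fun i =>
      Real.rpow_add (hpos i) _ _
    rw [Finset.prod_congr rfl fun i _ => h1 i, Finset.prod_mul_distrib]
    have h2 : ∀ i, fullVec x i ^ (if i = j then t else 0) =
        if i = j then fullVec x j ^ t else 1 := by
      intro i
      split
      · next h => rw [h]
      · exact Real.rpow_zero _
    rw [Finset.prod_congr rfl fun i _ => h2 i, Finset.prod_ite_eq' Finset.univ j
      (fun _ => fullVec x j ^ t), if_pos (Finset.mem_univ j)]
    ring
  refine le_trans (mul_le_mul_of_nonneg_left hexp_le (Real.rpow_nonneg (hpos j).le _)) ?_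
  exact le_of_eq (by rw [hsplit, hexp_eq])
end

section
/- Let m ≥ 2, let K ∈ ℝ^{m×m} be symmetric with K 1_m = 0_m, and let η ∈ ℝ^m. Then, as an identity of (possibly infinite) values in [0, ∞], ∫_{Δ_{−m}°} exp(−(1/2) L(x)^⊤ K L(x) + η^⊤ L(x)) dx = ∫_{ℝ^{m−1}} exp(−(1/2) y^⊤ K_{−m,−m} y + (η_{−m} + 1_{m−1})^⊤ y − (1_m^⊤ η + m) · log(1 + Σ_{k=1}^{m−1} e^{y_k})) dy, where L(x) = (log x_1, …, log x_{m−1}, log(1 − Σ_{j=1}^{m−1} x_j)). That is, the additive log-ratio transformation y_j = log(x_j / x_m) carries the log–log simplex kernel to the stated kernel on ℝ^{m−1}. -/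
open MeasureTheory Matrix Finset

noncomputable section ALRAux

variable {n : ℕ}

/-- Normalizing constant of the ALR map. -/
def Sfun (y : Fin n → ℝ) : ℝ := 1 + ∑ k, Real.exp (y k)

lemma Sfun_pos (y : Fin n → ℝ) : 0 < Sfun y := by
  have h : (0:ℝ) ≤ ∑ k, Real.exp (y k) :=
    Finset.sum_nonneg fun k _ => (Real.exp_pos _).le
  unfold Sfun; linarith

/-- The inverse ALR (softmax-type) map. -/
def phi (y : Fin n → ℝ) : Fin n → ℝ := fun i => Real.exp (y i) / Sfun y

lemma phi_pos (y : Fin n → ℝ) (i : Fin n) : 0 < phi y i :=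
  div_pos (Real.exp_pos _) (Sfun_pos y)

lemma sum_phi (y : Fin n → ℝ) : ∑ i, phi y i = 1 - 1 / Sfun y := by
  have hS := (Sfun_pos y).ne'
  unfold phi
  rw [← Finset.sum_div]
  have : ∑ i, Real.exp (y i) = Sfun y - 1 := by unfold Sfun; ring
  rw [this]; field_simp

lemma one_sub_sum_phi (y : Fin n → ℝ) : 1 - ∑ i, phi y i = 1 / Sfun y := by
  rw [sum_phi]; ring

lemma phi_mem (y : Fin n → ℝ) : phi y ∈ simplexInt n := by
  refine ⟨phi_pos y, ?_⟩
  rw [sum_phi]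
  have := Sfun_pos y
  have h1 : 0 < 1 / Sfun y := by positivity
  linarith

lemma phi_image : phi '' (Set.univ : Set (Fin n → ℝ)) = simplexInt n := by
  ext x
  constructor
  · rintro ⟨y, -, rfl⟩; exact phi_mem y
  · rintro ⟨hpos, hsum⟩
    set t := 1 - ∑ i, x i with ht
    have ht0 : 0 < t := by simp only [ht]; linarith
    refine ⟨fun i => Real.log (x i / t), Set.mem_univ _, ?_⟩
    have hexp : ∀ i, Real.exp (Real.log (x i / t)) = x i / t := fun i =>
      Real.exp_log (div_pos (hpos i) ht0)
    have hSt : Sfun (fun i => Real.log (x i / t)) = 1 / t := by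
      unfold Sfun
      simp only [hexp]
      rw [← Finset.sum_div]
      field_simp
      ring
    funext i
    unfold phi
    rw [hexp, hSt]
    field_simp

lemma phi_inj : Set.InjOn phi (Set.univ : Set (Fin n → ℝ)) := by
  rintro y - y' - h
  have hS : Sfun y = Sfun y' := by
    have h1 := one_sub_sum_phi y
    have h2 := one_sub_sum_phi y'
    rw [h] at h1
    have := h1.symm.trans h2
    have hy := Sfun_pos y; have hy' := Sfun_pos y'
    field_simp at this
    linarith
  funext i
  have hh := congrFun h i
  unfold phi at hh
  rw [hS] at hh
  field_simp [(Sfun_pos y').ne'] at hh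
  exact Real.exp_injective hh

/-- Jacobian matrix of `phi`. -/
def Jmat (y : Fin n → ℝ) : Matrix (Fin n) (Fin n) ℝ :=
  Matrix.of fun i j => (if i = j then phi y i else 0) - phi y i * phi y j

lemma Jmat_det (y : Fin n → ℝ) :
    (Jmat y).det = (∏ i, phi y i) * (1 / Sfun y) := by
  have hfac : Jmat y =
      Matrix.diagonal (phi y) *
        (1 + Matrix.replicateCol Unit (fun _ => (1:ℝ)) * Matrix.replicateRow Unit (fun i => -phi y i)) := by
    ext i j
    simp [Jmat, Matrix.mul_apply, Matrix.diagonal, Matrix.one_apply, Matrix.replicateCol, Matrix.replicateRow,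
      Finset.sum_ite_eq, mul_sub, mul_ite, mul_comm]
    by_cases h : i = j <;> simp [h] <;> ring
  rw [hfac, Matrix.det_mul, Matrix.det_diagonal, Matrix.det_one_add_replicateCol_mul_replicateRow]
  rw [← one_sub_sum_phi]
  congr 1
  simp [dotProduct]
  ring

lemma Jmat_det_pos (y : Fin n → ℝ) : 0 < (Jmat y).det := by
  rw [Jmat_det]
  have h1 : 0 < ∏ i, phi y i := Finset.prod_pos fun i _ => phi_pos y i
  have h2 := Sfun_pos y
  positivity

/-- The Jacobian as a continuous linear map. -/
def Dphi (y : Fin n → ℝ) : (Fin n → ℝ) →L[ℝ] (Fin n → ℝ) :=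
  LinearMap.toContinuousLinearMap (Matrix.toLin' (Jmat y))

lemma Dphi_det (y : Fin n → ℝ) : (Dphi y).det = (Jmat y).det := by
  rw [ContinuousLinearMap.det]
  rw [show ((Dphi y : (Fin n → ℝ) →L[ℝ] (Fin n → ℝ)) : (Fin n → ℝ) →ₗ[ℝ] (Fin n → ℝ))
      = Matrix.toLin' (Jmat y) from LinearMap.coe_toContinuousLinearMap _]
  exact LinearMap.det_toLin' _

lemma hasFDerivAt_phi (y : Fin n → ℝ) : HasFDerivAt phi (Dphi y) y := by
  apply hasFDerivAt_pi''
  intro i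
  have hne := (Sfun_pos y).ne'
  have hexp : ∀ (j : Fin n), HasFDerivAt (fun z : Fin n → ℝ => Real.exp (z j))
      (Real.exp (y j) • ContinuousLinearMap.proj j) y := fun j => by
    simpa [Function.comp_def] using
      (Real.hasDerivAt_exp (y j)).comp_hasFDerivAt y (hasFDerivAt_apply (𝕜 := ℝ) j y)
  have hsum : HasFDerivAt (fun z : Fin n → ℝ => ∑ k, Real.exp (z k))
      (∑ k, Real.exp (y k) • ContinuousLinearMap.proj k) y :=
    HasFDerivAt.fun_sum fun k _ => hexp k
  have hS : HasFDerivAt Sfun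
      (∑ k, Real.exp (y k) • (ContinuousLinearMap.proj k : (Fin n → ℝ) →L[ℝ] ℝ)) y :=
    hsum.const_add 1
  have hinv : HasFDerivAt (fun z => (Sfun z)⁻¹)
      ((-(Sfun y ^ 2)⁻¹) • ∑ k, Real.exp (y k) •
        (ContinuousLinearMap.proj k : (Fin n → ℝ) →L[ℝ] ℝ)) y :=
    (hasDerivAt_inv hne).comp_hasFDerivAt y hS
  have hmul := (hexp i).fun_mul hinv
  have heq : (fun z : Fin n → ℝ => Real.exp (z i) * (Sfun z)⁻¹) = fun z => phi z i := by
    funext z; simp [phi, div_eq_mul_inv]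
  rw [heq] at hmul
  refine hmul.congr_fderiv ?_
  symm
  apply ContinuousLinearMap.ext; intro v
  simp only [ContinuousLinearMap.coe_comp', Function.comp_apply, ContinuousLinearMap.add_apply,
    ContinuousLinearMap.coe_smul', Pi.smul_apply, ContinuousLinearMap.proj_apply,
    ContinuousLinearMap.coe_sum', Finset.sum_apply, smul_eq_mul, Dphi,
    LinearMap.coe_toContinuousLinearMap', Matrix.toLin'_apply]
  show (Jmat y *ᵥ v) i = _
  have hm : (Jmat y *ᵥ v) i
      = phi y i * v i - phi y i * ∑ j, phi y j * v j := by
    simp only [Matrix.mulVec, dotProduct, Jmat, Matrix.of_apply, sub_mul,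
      Finset.sum_sub_distrib, ite_mul, zero_mul, Finset.sum_ite_eq, Finset.mem_univ, if_true,
      Finset.mul_sum]
    congr 1
    apply Finset.sum_congr rfl; intro j _; ring
  rw [hm]
  have hphi : ∀ j, phi y j = Real.exp (y j) * (Sfun y)⁻¹ := fun j => by
    simp [phi, div_eq_mul_inv]
  simp only [hphi, Finset.mul_sum]
  have hSum : ∑ j, Real.exp (y i) * (Sfun y)⁻¹ * (Real.exp (y j) * (Sfun y)⁻¹ * v j)
      = -∑ j, Real.exp (y i) * (-(Sfun y ^ 2)⁻¹ * (Real.exp (y j) * v j)) := by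
    rw [← Finset.sum_neg_distrib]
    apply Finset.sum_congr rfl; intro j _
    rw [pow_two, mul_inv]
    ring
  rw [hSum]; ring

lemma quad_shift (K : Matrix (Fin (n+1)) (Fin (n+1)) ℝ) (hK : K.IsSymm)
    (h1 : K.mulVec (fun _ => 1) = 0) (w : Fin (n+1) → ℝ) (c : ℝ) :
    (fun j => w j - c) ⬝ᵥ K.mulVec (fun j => w j - c) = w ⬝ᵥ K.mulVec w := by
  have hw : (fun j => w j - c) = w - c • (fun _ => (1:ℝ)) := by
    funext j; simp
  have h2 : (fun _ => (1:ℝ)) ᵥ* K = 0 := by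
    have hvt := Matrix.vecMul_transpose K (fun _ => (1:ℝ))
    rw [hK] at hvt
    rw [hvt, h1]
  rw [hw, Matrix.mulVec_sub, Matrix.mulVec_smul, h1, smul_zero, sub_zero,
    sub_dotProduct, smul_dotProduct,
    Matrix.dotProduct_mulVec (fun _ => (1:ℝ)) K w, h2,
    zero_dotProduct, smul_zero, sub_zero]

lemma snoc_quad (K : Matrix (Fin (n+1)) (Fin (n+1)) ℝ) (y : Fin n → ℝ) :
    (Fin.snoc y 0 : Fin (n+1) → ℝ) ⬝ᵥ K.mulVec (Fin.snoc y 0) =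
      y ⬝ᵥ (K.submatrix Fin.castSucc Fin.castSucc).mulVec y := by
  simp [dotProduct, Matrix.mulVec, Fin.sum_univ_castSucc, Matrix.submatrix]

lemma snoc_dot (η : Fin (n+1) → ℝ) (y : Fin n → ℝ) :
    η ⬝ᵥ (Fin.snoc y 0 : Fin (n+1) → ℝ) = ∑ i, η i.castSucc * y i := by
  simp [dotProduct, Fin.sum_univ_castSucc]

lemma dot_shift (η : Fin (n+1) → ℝ) (w : Fin (n+1) → ℝ) (c : ℝ) :
    η ⬝ᵥ (fun j => w j - c) = η ⬝ᵥ w - c * ∑ j, η j := by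
  simp only [dotProduct, mul_sub, Finset.sum_sub_distrib, Finset.mul_sum]
  congr 1
  apply Finset.sum_congr rfl; intro j _; ring

lemma logVec_fullVec_phi (y : Fin n → ℝ) :
    logVec (fullVec (phi y)) = fun j => (Fin.snoc y (0:ℝ) : Fin (n+1) → ℝ) j - Real.log (Sfun y) := by
  funext j
  unfold logVec fullVec
  refine Fin.lastCases ?_ (fun i => ?_) j
  · rw [Fin.snoc_last, Fin.snoc_last, one_sub_sum_phi, one_div, Real.log_inv]
    ring
  · rw [Fin.snoc_castSucc, Fin.snoc_castSucc]
    unfold phi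
    rw [Real.log_div (Real.exp_ne_zero _) (Sfun_pos y).ne', Real.log_exp]

lemma Jmat_det_eq_exp (y : Fin n → ℝ) :
    (Jmat y).det = Real.exp ((∑ i, y i) - ((n:ℝ)+1) * Real.log (Sfun y)) := by
  rw [Jmat_det]
  have h1 : ∏ i, phi y i = Real.exp (∑ i, y i) / (Sfun y)^n := by
    unfold phi
    rw [Finset.prod_div_distrib, Real.exp_sum, Finset.prod_const, Finset.card_univ,
      Fintype.card_fin]
  have h2 : Real.exp (((n:ℝ)+1) * Real.log (Sfun y)) = Sfun y ^ (n+1) := by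
    rw [show ((n:ℝ)+1) = ((n+1:ℕ):ℝ) by push_cast; ring, Real.exp_nat_mul,
      Real.exp_log (Sfun_pos y)]
  rw [h1, Real.exp_sub, h2]
  have hS := (Sfun_pos y).ne'
  field_simp
  rw [pow_succ]

end ALRAux

/-- The additive log-ratio transformation carries the log–log simplex kernel to a kernel
on `ℝ^{m-1}`: an identity of (possibly infinite) Lebesgue integrals in `[0, ∞]`. -/
theorem alr_transform_integral_identity (n : ℕ) (hn : 1 ≤ n)
    (K : Matrix (Fin (n + 1)) (Fin (n + 1)) ℝ) (hK : K.IsSymm)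
    (h1 : K.mulVec (fun _ => 1) = 0) (η : Fin (n + 1) → ℝ) :
    ∫⁻ x in simplexInt n, ENNReal.ofReal
        (Real.exp (-(1 / 2) * (logVec (fullVec x) ⬝ᵥ K.mulVec (logVec (fullVec x)))
          + η ⬝ᵥ logVec (fullVec x)))
    = ∫⁻ y : Fin n → ℝ, ENNReal.ofReal
        (Real.exp (-(1 / 2) * (y ⬝ᵥ (K.submatrix Fin.castSucc Fin.castSucc).mulVec y)
          + (∑ i, (η i.castSucc + 1) * y i)
          - ((∑ i, η i) + ((n : ℝ) + 1)) * Real.log (1 + ∑ k, Real.exp (y k)))) := by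
  have key := lintegral_image_eq_lintegral_abs_det_fderiv_mul (μ := volume)
    (f := phi) (f' := Dphi) MeasurableSet.univ
    (fun y _ => (hasFDerivAt_phi y).hasFDerivWithinAt) phi_inj
    (fun x => ENNReal.ofReal
      (Real.exp (-(1 / 2) * (logVec (fullVec x) ⬝ᵥ K.mulVec (logVec (fullVec x)))
        + η ⬝ᵥ logVec (fullVec x))))
  rw [phi_image, Measure.restrict_univ] at key
  rw [key]
  apply lintegral_congr
  intro y
  rw [Dphi_det, abs_of_pos (Jmat_det_pos y), Jmat_det_eq_exp,
    ← ENNReal.ofReal_mul (Real.exp_nonneg _), ← Real.exp_add]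
  congr 1
  rw [logVec_fullVec_phi, quad_shift K hK h1, snoc_quad, dot_shift, snoc_dot]
  have hlog : Real.log (1 + ∑ k, Real.exp (y k)) = Real.log (Sfun y) := rfl
  rw [hlog]
  simp only [add_mul, one_mul, Finset.sum_add_distrib]
  ring
end

section
/- Let m ≥ 2, K ∈ ℝ^{m×m}, η ∈ ℝ^m, a > 0, b > 0, fix j ∈ {1,…,m−1}, α > max{0, 1−a, 1−b}, and fix x_{−j,−m} ∈ ℝ^{m−2} with all coordinates positive and coordinate sum strictly less than 1. With x_m := 1 − x_j − Σ_{i≠j,m} x_i and the profiled score s_j(x) = −(κ_{·,j}^⊤ x^a) x_j^{a−1} + (κ_{·,m}^⊤ x^a) x_m^{a−1} + η_j x_j^{b−1} − η_m x_m^{b−1}, the function x_j ↦ min{x_j, x_m}^α · s_j(x) tends to 0 both as x_j → 0⁺ and as x_j → (1 − Σ_{i≠j,m} x_i)⁻ (i.e., as x_m → 0⁺). -/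
open Matrix Finset Filter

private lemma rpow_tendsto_zero {l : Filter ℝ} {u : ℝ → ℝ} {p : ℝ}
    (hp : 0 < p) (hu : Tendsto u l (nhds 0)) :
    Tendsto (fun t => u t ^ p) l (nhds 0) := by
  have h := (Real.continuousAt_rpow_const 0 p (Or.inr hp.le)).tendsto.comp hu
  rw [Real.zero_rpow hp.ne'] at h
  exact h

private lemma score_aux {l : Filter ℝ} {u v A B : ℝ → ℝ} {cA cB e a b α : ℝ}
    (hα0 : 0 < α) (hαa : 0 < α + (a - 1)) (hαb : 0 < α + (b - 1))
    (he : 0 < e)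
    (hu : Tendsto u l (nhds 0)) (hv : Tendsto v l (nhds e))
    (hu0 : ∀ᶠ t in l, 0 < u t)
    (hA : Tendsto A l (nhds cA)) (hB : Tendsto B l (nhds cB))
    (ηu ηv : ℝ) :
    Tendsto (fun t => min (u t) (v t) ^ α *
      (-(A t) * u t ^ (a - 1) + B t * v t ^ (a - 1)
        + ηu * u t ^ (b - 1) - ηv * v t ^ (b - 1))) l (nhds 0) := by
  have huv : ∀ᶠ t in l, u t < v t := by
    have h := (hv.sub hu).eventually (eventually_gt_nhds (by simpa using he))
    filter_upwards [h] with t ht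
    linarith
  have heq : ∀ᶠ t in l,
      (fun t => -(A t) * u t ^ (α + (a - 1)) + B t * (u t ^ α * v t ^ (a - 1))
        + ηu * u t ^ (α + (b - 1)) - ηv * (u t ^ α * v t ^ (b - 1))) t
      = min (u t) (v t) ^ α *
        (-(A t) * u t ^ (a - 1) + B t * v t ^ (a - 1)
          + ηu * u t ^ (b - 1) - ηv * v t ^ (b - 1)) := by
    filter_upwards [hu0, huv] with t h0 hlt
    rw [min_eq_left hlt.le, Real.rpow_add h0, Real.rpow_add h0]
    ring
  apply Tendsto.congr' heq
  have h1 : Tendsto (fun t => u t ^ α) l (nhds 0) := rpow_tendsto_zero hα0 hu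
  have h2 : Tendsto (fun t => u t ^ (α + (a - 1))) l (nhds 0) := rpow_tendsto_zero hαa hu
  have h3 : Tendsto (fun t => u t ^ (α + (b - 1))) l (nhds 0) := rpow_tendsto_zero hαb hu
  have h4 : Tendsto (fun t => v t ^ (a - 1)) l (nhds (e ^ (a - 1))) :=
    (Real.continuousAt_rpow_const e (a - 1) (Or.inl he.ne')).tendsto.comp hv
  have h5 : Tendsto (fun t => v t ^ (b - 1)) l (nhds (e ^ (b - 1))) :=
    (Real.continuousAt_rpow_const e (b - 1) (Or.inl he.ne')).tendsto.comp hv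
  have := (((hA.neg.mul h2).add (hB.mul (h1.mul h4))).add
    ((tendsto_const_nhds (x := ηu)).mul h3)).sub ((tendsto_const_nhds (x := ηv)).mul (h1.mul h5))
  simpa using this

/-- The profiled score `s_j(x)` of the `a`-`b` model on the simplex (substituting
`x_m = 1 - ∑_{i<m} x_i`), evaluated at a full vector `X ∈ ℝ^{n+1}`. -/
noncomputable def scoreFn {n : ℕ} (K : Matrix (Fin (n + 1)) (Fin (n + 1)) ℝ)
    (η : Fin (n + 1) → ℝ) (a b : ℝ) (j : Fin n) (X : Fin (n + 1) → ℝ) : ℝ :=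
  -(∑ i, K i j.castSucc * X i ^ a) * X j.castSucc ^ (a - 1)
    + (∑ i, K i (Fin.last n) * X i ^ a) * X (Fin.last n) ^ (a - 1)
    + η j.castSucc * X j.castSucc ^ (b - 1)
    - η (Fin.last n) * X (Fin.last n) ^ (b - 1)

/-- With all other coordinates `w` fixed, the weighted profiled score
`min{x_j, x_m}^α s_j(x)` vanishes in the limit as `x_j → 0⁺` and as
`x_j → (1 - ∑ w)⁻` (i.e., `x_m → 0⁺`). Here `m = n + 2`, `j` ranges over the first
`m - 1` coordinates, and `w ∈ ℝ^{m-2}` collects the coordinates other than `x_j, x_m`. -/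
theorem weighted_score_boundary_limit (n : ℕ)
    (K : Matrix (Fin (n + 2)) (Fin (n + 2)) ℝ) (η : Fin (n + 2) → ℝ)
    (a b : ℝ) (ha : 0 < a) (hb : 0 < b)
    (j : Fin (n + 1)) (α : ℝ) (hα : max 0 (max (1 - a) (1 - b)) < α)
    (w : Fin n → ℝ) (hw : ∀ i, 0 < w i) (hws : ∑ i, w i < 1) :
    Tendsto
      (fun u : ℝ => min u (1 - u - ∑ i, w i) ^ α *
        scoreFn K η a b j (Fin.snoc (j.insertNth u w) (1 - u - ∑ i, w i)))
      (nhdsWithin 0 (Set.Ioi 0)) (nhds 0)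
    ∧ Tendsto
      (fun u : ℝ => min u (1 - u - ∑ i, w i) ^ α *
        scoreFn K η a b j (Fin.snoc (j.insertNth u w) (1 - u - ∑ i, w i)))
      (nhdsWithin (1 - ∑ i, w i) (Set.Iio (1 - ∑ i, w i))) (nhds 0) := by
  set S := ∑ i, w i with hSdef
  have hS : (0:ℝ) < 1 - S := by linarith
  have hα0 : 0 < α := (le_max_left _ _).trans_lt hα
  have h1a : 1 - a < α := ((le_max_left _ _).trans (le_max_right _ _)).trans_lt hα
  have h1b : 1 - b < α := ((le_max_right _ _).trans (le_max_right _ _)).trans_lt hα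
  have hαa : 0 < α + (a - 1) := by linarith
  have hαb : 0 < α + (b - 1) := by linarith
  have hrpow : Continuous fun x : ℝ => x ^ a := by
    rw [continuous_iff_continuousAt]
    intro x
    exact Real.continuousAt_rpow_const x a (Or.inr ha.le)
  have hXc : ∀ i : Fin (n + 2),
      Continuous (fun u : ℝ =>
        (Fin.snoc (j.insertNth u w) (1 - u - S) : Fin (n + 2) → ℝ) i) := by
    intro i
    induction i using Fin.lastCases with
    | last =>
      simp only [Fin.snoc_last]
      exact (continuous_const.sub continuous_id).sub continuous_const
    | cast k =>
      simp only [Fin.snoc_castSucc]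
      by_cases hk : k = j
      · subst hk
        simp only [Fin.insertNth_apply_same]
        exact continuous_id
      · obtain ⟨k', hk'⟩ := Fin.exists_succAbove_eq hk
        subst hk'
        simpa [Fin.insertNth_apply_succAbove] using continuous_const
  have hsum : ∀ c : Fin (n + 2),
      Continuous (fun u : ℝ =>
        ∑ i, K i c * (Fin.snoc (j.insertNth u w) (1 - u - S) : Fin (n + 2) → ℝ) i ^ a) := by
    intro c
    apply continuous_finset_sum
    intro i _
    exact continuous_const.mul (hrpow.comp (hXc i))
  set A : ℝ → ℝ := fun u =>
    ∑ i, K i j.castSucc * (Fin.snoc (j.insertNth u w) (1 - u - S) : Fin (n + 2) → ℝ) i ^ a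
    with hAdef
  set B : ℝ → ℝ := fun u =>
    ∑ i, K i (Fin.last (n + 1)) *
      (Fin.snoc (j.insertNth u w) (1 - u - S) : Fin (n + 2) → ℝ) i ^ a with hBdef
  constructor
  · have key := score_aux (l := nhdsWithin 0 (Set.Ioi 0)) (u := fun t : ℝ => t)
      (v := fun t : ℝ => 1 - t - S) (A := A) (B := B) (e := 1 - S)
      hα0 hαa hαb hS
      ((continuous_id.tendsto 0).mono_left nhdsWithin_le_nhds)
      (by
        have hc : Continuous fun t : ℝ => 1 - t - S := by continuity
        have h := hc.tendsto 0
        have h0 : (1:ℝ) - 0 - S = 1 - S := by ring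
        rw [h0] at h
        exact h.mono_left nhdsWithin_le_nhds)
      (eventually_mem_nhdsWithin.mono fun x hx => hx)
      (((hsum j.castSucc).tendsto 0).mono_left nhdsWithin_le_nhds)
      (((hsum (Fin.last (n + 1))).tendsto 0).mono_left nhdsWithin_le_nhds)
      (η j.castSucc) (η (Fin.last (n + 1)))
    refine Tendsto.congr (fun t => ?_) key
    simp only [scoreFn, hAdef, hBdef, Fin.snoc_castSucc, Fin.snoc_last,
      Fin.insertNth_apply_same]
  · have key := score_aux (l := nhdsWithin (1 - S) (Set.Iio (1 - S)))
      (u := fun t : ℝ => 1 - t - S) (v := fun t : ℝ => t)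
      (A := fun t => -(B t)) (B := fun t => -(A t)) (e := 1 - S)
      hα0 hαa hαb hS
      (by
        have hc : Continuous fun t : ℝ => 1 - t - S := by continuity
        have h := hc.tendsto (1 - S)
        have h0 : (1:ℝ) - (1 - S) - S = 0 := by ring
        rw [h0] at h
        exact h.mono_left nhdsWithin_le_nhds)
      ((continuous_id.tendsto (1 - S)).mono_left nhdsWithin_le_nhds)
      (eventually_mem_nhdsWithin.mono fun x hx => by
        simp only [Set.mem_Iio] at hx
        show (0:ℝ) < 1 - x - S
        linarith)
      ((((hsum (Fin.last (n + 1))).tendsto (1 - S)).mono_left nhdsWithin_le_nhds).neg)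
      ((((hsum j.castSucc).tendsto (1 - S)).mono_left nhdsWithin_le_nhds).neg)
      (-η (Fin.last (n + 1))) (-η j.castSucc)
    refine Tendsto.congr (fun t => ?_) key
    rw [min_comm]
    simp only [scoreFn, hAdef, hBdef, Fin.snoc_castSucc, Fin.snoc_last,
      Fin.insertNth_apply_same]
    ring
end
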